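/- Let A₀, …, A_n be unital C*-algebras, L_k a seminorm on the self-adjoint part sa(A_k) of A_k with L_k(1) = 0, and φ_k a state on A_k, such that for every C > 0 and every k the set {a ∈ sa(A_k) : L_k(a) ≤ 1, |φ_k(a)| ≤ C} is totally bounded in A_k. Let R₀, …, R_{n−1} > 0. Then the set {(a₀, …, a_n) ∈ ∏_k sa(A_k) : L_k(a_k) ≤ 1 for all k, |φ_{k+1}(a_{k+1}) − φ_k(a_k)| ≤ R_k for all k < n, and φ₀(a₀) = 0} is totally bounded in the product ∏_k A_k equipped with the maximum norm. -/

import Mathlib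

/-- Let `A₀, …, A_n` be unital C*-algebras, `L_k` a seminorm on the
self-adjoint part of `A_k` with `L_k 1 = 0`, and `φ_k` a state on `A_k`, such that for every
`C > 0` and every `k` the set `{a ∈ sa(A_k) : L_k a ≤ 1, |φ_k a| ≤ C}` is totally bounded.
Let `R₀, …, R_{n−1} > 0`.  Then the set of tuples `(a₀, …, a_n)` of self-adjoint elements with
`L_k (a_k) ≤ 1`, `|φ_{k+1}(a_{k+1}) − φ_k(a_k)| ≤ R_k` and `φ₀ (a₀) = 0` is totally bounded in
the product (with the maximum norm / product uniformity). -/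
theorem totallyBounded_coarse_disjoint_union
    {n : ℕ} {A : Fin (n + 1) → Type*}
    [∀ k, NormedRing (A k)] [∀ k, StarRing (A k)] [∀ k, CStarRing (A k)]
    [∀ k, NormedAlgebra ℂ (A k)] [∀ k, CompleteSpace (A k)] [∀ k, StarModule ℂ (A k)]
    (L : ∀ k, A k → ℝ)
    (hL1 : ∀ k, L k 1 = 0)
    (hLadd : ∀ k, ∀ a b : A k, IsSelfAdjoint a → IsSelfAdjoint b →
      L k (a + b) ≤ L k a + L k b)
    (hLsmul : ∀ k, ∀ a : A k, ∀ t : ℝ, IsSelfAdjoint a → L k (t • a) = |t| * L k a)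
    (φ : ∀ k, A k →ₗ[ℂ] ℂ)
    (hφ1 : ∀ k, φ k 1 = 1)
    (hφpos : ∀ k, ∀ a : A k, 0 ≤ ((φ k) (star a * a)).re ∧ ((φ k) (star a * a)).im = 0)
    (hTB : ∀ C > (0 : ℝ), ∀ k,
      TotallyBounded {a : A k | IsSelfAdjoint a ∧ L k a ≤ 1 ∧ ‖φ k a‖ ≤ C})
    (R : Fin n → ℝ) (hR : ∀ k, 0 < R k) :
    TotallyBounded {a : ∀ k, A k |
      (∀ k, IsSelfAdjoint (a k)) ∧ (∀ k, L k (a k) ≤ 1) ∧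
      (∀ k : Fin n, ‖φ k.succ (a k.succ) - φ k.castSucc (a k.castSucc)‖ ≤ R k) ∧
      φ 0 (a 0) = 0} := by
  classical
  set S : ℝ := ∑ j, R j with hS
  have hS0 : 0 ≤ S := Finset.sum_nonneg fun j _ => (hR j).le
  have hRS : ∀ j : Fin n, R j ≤ S := fun j =>
    Finset.single_le_sum (fun i _ => (hR i).le) (Finset.mem_univ j)
  set C : ℝ := (n + 1) * S + 1 with hC
  have hC0 : 0 < C := by positivity
  set T : ∀ k, Set (A k) := fun k => {a : A k | IsSelfAdjoint a ∧ L k a ≤ 1 ∧ ‖φ k a‖ ≤ C}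
    with hT
  have hK : ∀ k, IsCompact (closure (T k)) := fun k =>
    TotallyBounded.isCompact_of_isClosed (totallyBounded_closure.2 (hTB C hC0 k))
      isClosed_closure
  refine TotallyBounded.subset ?_ (isCompact_univ_pi hK).totallyBounded
  rintro a ⟨hsa, hl, hgap, h0⟩
  intro k _
  refine subset_closure ⟨hsa k, hl k, ?_⟩
  have key : ∀ m : ℕ, ∀ h : m < n + 1, ‖φ ⟨m, h⟩ (a ⟨m, h⟩)‖ ≤ m * S := by
    intro m
    induction m with
    | zero =>
      intro h
      have : (⟨0, h⟩ : Fin (n + 1)) = 0 := rfl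
      rw [this, h0]
      simp
    | succ m ih =>
      intro h
      have hm : m < n := Nat.lt_of_succ_lt_succ h
      have hm' : m < n + 1 := Nat.lt_of_lt_of_le hm n.le_succ
      have h1 : (⟨m + 1, h⟩ : Fin (n + 1)) = (⟨m, hm⟩ : Fin n).succ := rfl
      have h2 : (⟨m, hm'⟩ : Fin (n + 1)) = (⟨m, hm⟩ : Fin n).castSucc := rfl
      calc ‖φ ⟨m + 1, h⟩ (a ⟨m + 1, h⟩)‖
          ≤ ‖φ ⟨m + 1, h⟩ (a ⟨m + 1, h⟩) - φ ⟨m, hm'⟩ (a ⟨m, hm'⟩)‖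
            + ‖φ ⟨m, hm'⟩ (a ⟨m, hm'⟩)‖ := by simpa using norm_add_le (φ ⟨m + 1, h⟩ (a ⟨m + 1, h⟩) - φ ⟨m, hm'⟩ (a ⟨m, hm'⟩)) (φ ⟨m, hm'⟩ (a ⟨m, hm'⟩))
        _ ≤ R ⟨m, hm⟩ + m * S := by
            refine add_le_add ?_ (ih hm')
            rw [h1, h2]
            exact hgap ⟨m, hm⟩
        _ ≤ S + m * S := add_le_add_left (hRS _) _
        _ = (m + 1 : ℕ) * S := by push_cast; ring
  calc ‖φ k (a k)‖ ≤ (k : ℕ) * S := by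
        have := key k.1 k.2
        simpa using this
    _ ≤ (n + 1) * S := by
        have : ((k : ℕ) : ℝ) ≤ (n + 1 : ℝ) := by exact_mod_cast (k.2).le
        exact mul_le_mul_of_nonneg_right this hS0
    _ ≤ C := by simp [hC]
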